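/- Let A be the deterministic parity tree automaton over Σ = {a, b, c₀, c₁} with states {s, p₀, p₁, ⊤}, initial state s, ranks rank(s) = rank(p₀) = rank(⊤) = 0 and rank(p₁) = 1, and transitions δ(s,a) = (s,p₀), δ(s,b) = δ(s,c₀) = δ(s,c₁) = (⊤,⊤), δ(p₀,c₀) = (p₀,⊤), δ(p₀,c₁) = (p₁,⊤), δ(p₀,a) = δ(p₀,b) = (⊤,⊤), δ(p₁,c₁) = (p₀,⊤), δ(p₁,a) = δ(p₁,b) = δ(p₁,c₀) = (⊤,⊤), δ(⊤,x) = (⊤,⊤) for all x ∈ Σ. Then L(A) is Π⁰₃-complete: L(A) ∈ Π⁰₃(T_Σ), and every Π⁰₃ subset of the Cantor space {0,1}^ℕ Wadge-reduces to L(A). -/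

import Mathlib

open Filter

/-- A deterministic parity tree automaton over alphabet `Alpha` with state set `Q`. -/
structure DPTA (Alpha : Type) (Q : Type) where
  init : Q
  delta : Q → Alpha → Q × Q
  rank : Q → ℕ

namespace DPTA

variable {Alpha Q : Type}

/-- The state reached in one step from `q` reading letter `s` in direction `d`. -/
def next (M : DPTA Alpha Q) (q : Q) (s : Alpha) (d : Bool) : Q :=
  if d then (M.delta q s).2 else (M.delta q s).1

/-- The state of the run started in `q` on the tree `t` at the node `v`
(nodes are words over `{0,1}`, head = first direction from the root). -/
def runFrom (M : DPTA Alpha Q) : Q → (List Bool → Alpha) → List Bool → Q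
  | q, _, [] => q
  | q, t, d :: v => runFrom M (M.next q (t []) d) (fun u => t (d :: u)) v

/-- The state of the (unique) run of `M` on `t` at node `v`. -/
def run (M : DPTA Alpha Q) (t : List Bool → Alpha) (v : List Bool) : Q :=
  runFrom M M.init t v

/-- Parity acceptance: the largest value occurring infinitely often is even. -/
def ParityAccept (f : ℕ → ℕ) : Prop :=
  Even (sSup {r : ℕ | ∃ᶠ n in atTop, f n = r})

/-- The prefix of length `n` of an infinite path. -/
def pref (π : ℕ → Bool) (n : ℕ) : List Bool :=
  List.ofFn fun i : Fin n => π i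

/-- The run of `M` on `t` started at state `q` is accepting. -/
def AcceptsFrom (M : DPTA Alpha Q) (q : Q) (t : List Bool → Alpha) : Prop :=
  ∀ π : ℕ → Bool, ParityAccept fun n => M.rank (runFrom M q t (pref π n))

/-- The language recognised by `M`: trees with accepting run. -/
def Lang (M : DPTA Alpha Q) : Set (List Bool → Alpha) :=
  {t | M.AcceptsFrom M.init t}

/-- The state reached from `q` following a finite sequence of steps
(steps = letter together with direction). -/
def follow (M : DPTA Alpha Q) (q : Q) (steps : List (Alpha × Bool)) : Q :=
  steps.foldl (fun p s => M.next p s.1 s.2) q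

/-- All states visited along a path (the starting state included). -/
def statesOn (M : DPTA Alpha Q) (q : Q) (steps : List (Alpha × Bool)) : List Q :=
  List.scanl (fun p s => M.next p s.1 s.2) q steps

/-- The largest rank of a state visited along a path. -/
def maxRankOn (M : DPTA Alpha Q) (q : Q) (steps : List (Alpha × Bool)) : ℕ :=
  ((M.statesOn q steps).map M.rank).foldr max 0

/-- `steps` forms a loop at `q` (a path of positive length from `q` to `q`). -/
def IsLoop (M : DPTA Alpha Q) (q : Q) (steps : List (Alpha × Bool)) : Prop :=
  steps ≠ [] ∧ M.follow q steps = q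

/-- `M` contains an `(i,k)`-flower: loops `lam i, …, lam k` at a common state `q`,
the largest rank on `lam j` has the parity of `j` and increases strictly with `j`. -/
def HasFlower (M : DPTA Alpha Q) (i k : ℕ) : Prop :=
  ∃ (q : Q) (lam : ℕ → List (Alpha × Bool)),
    (∀ j, i ≤ j → j ≤ k → M.IsLoop q (lam j) ∧ M.maxRankOn q (lam j) % 2 = j % 2) ∧
    (∀ j, i ≤ j → j < k → M.maxRankOn q (lam j) < M.maxRankOn q (lam (j + 1)))

/-- `q` is reachable from the initial state. -/
def Reachable (M : DPTA Alpha Q) (q : Q) : Prop :=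
  ∃ steps, M.follow M.init steps = q

/-- `q` is productive: it occurs in some accepting run of `M`. -/
def Productive (M : DPTA Alpha Q) (q : Q) : Prop :=
  ∃ t ∈ M.Lang, ∃ v, M.run t v = q

/-- The transition from `q` reading `s` is used in some accepting run of `M`. -/
def ProductiveTrans (M : DPTA Alpha Q) (q : Q) (s : Alpha) : Prop :=
  ∃ t ∈ M.Lang, ∃ v, M.run t v = q ∧ t v = s

/-- `q` is all-rejecting: started from `q`, the automaton accepts no tree. -/
def AllRejecting (M : DPTA Alpha Q) (q : Q) : Prop :=
  ∀ t, ¬ M.AcceptsFrom q t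

/-- `M` is normalized: every state is reachable, every state is productive except
possibly one all-rejecting state `⊥` with `δ(⊥,σ) = (⊥,⊥)`, and every transition is
productive or of the form `δ(q,σ) = (⊥,⊥)`. -/
def Normalized (M : DPTA Alpha Q) : Prop :=
  (∀ q, M.Reachable q) ∧
  ∃ bot : Option Q,
    (∀ q, some q ≠ bot → M.Productive q) ∧
    (∀ q, some q = bot → M.AllRejecting q ∧ ∀ s, M.delta q s = (q, q)) ∧
    (∀ q s, M.ProductiveTrans q s ∨
      (some (M.delta q s).1 = bot ∧ some (M.delta q s).2 = bot))

end DPTA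


/-- Wadge reducibility: `A ≤_W B` iff `A` is the preimage of `B` under a continuous map. -/
def WadgeLE {X Y : Type} [TopologicalSpace X] [TopologicalSpace Y]
    (A : Set X) (B : Set Y) : Prop :=
  ∃ φ : X → Y, Continuous φ ∧ A = φ ⁻¹' B

/-- `Σ⁰₂` sets: countable unions of closed sets. -/
def IsSigma02 {X : Type} [TopologicalSpace X] (s : Set X) : Prop :=
  ∃ f : ℕ → Set X, (∀ n, IsClosed (f n)) ∧ s = ⋃ n, f n

/-- `Π⁰₂` sets: countable intersections of open sets. -/
def IsPi02 {X : Type} [TopologicalSpace X] (s : Set X) : Prop :=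
  ∃ f : ℕ → Set X, (∀ n, IsOpen (f n)) ∧ s = ⋂ n, f n

/-- `Π⁰₃` sets: countable intersections of `Σ⁰₂` sets. -/
def IsPi03 {X : Type} [TopologicalSpace X] (s : Set X) : Prop :=
  ∃ f : ℕ → Set X, (∀ n, IsSigma02 (f n)) ∧ s = ⋂ n, f n

/-- `Σ⁰₃` sets: countable unions of `Π⁰₂` sets. -/
def IsSigma03 {X : Type} [TopologicalSpace X] (s : Set X) : Prop :=
  ∃ f : ℕ → Set X, (∀ n, IsPi02 (f n)) ∧ s = ⋃ n, f n

/-- The four-letter alphabet `{a, b, c₀, c₁}`. -/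
inductive Ab17 : Type
  | a | b | c0 | c1
  deriving DecidableEq

instance : TopologicalSpace Ab17 := ⊥
instance : DiscreteTopology Ab17 := ⟨rfl⟩

/-- The states `{s, p₀, p₁, ⊤}`. -/
inductive St17 : Type
  | s | p0 | p1 | top
  deriving DecidableEq

/-- The automaton of Statement 17 (`C_{ω^{ω·3}+1}`): `rank s = rank p₀ = rank ⊤ = 0`,
`rank p₁ = 1`, `δ(s,a) = (s,p₀)`, `δ(s,b) = δ(s,c₀) = δ(s,c₁) = (⊤,⊤)`,
`δ(p₀,c₀) = (p₀,⊤)`, `δ(p₀,c₁) = (p₁,⊤)`, `δ(p₀,a) = δ(p₀,b) = (⊤,⊤)`,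
`δ(p₁,c₁) = (p₀,⊤)`, `δ(p₁,a) = δ(p₁,b) = δ(p₁,c₀) = (⊤,⊤)`, `δ(⊤,x) = (⊤,⊤)`. -/
def M17 : DPTA Ab17 St17 where
  init := .s
  delta := fun q s =>
    match q, s with
    | .s, .a => (.s, .p0)
    | .s, _ => (.top, .top)
    | .p0, .c0 => (.p0, .top)
    | .p0, .c1 => (.p1, .top)
    | .p0, _ => (.top, .top)
    | .p1, .c1 => (.p0, .top)
    | .p1, _ => (.top, .top)
    | .top, _ => (.top, .top)
  rank := fun q =>
    match q with
    | .p1 => 1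
    | _ => 0

section Aux
open DPTA

lemma runFrom_append {Alpha Q : Type} (M : DPTA Alpha Q) (q : Q) (t : List Bool → Alpha)
    (v w : List Bool) :
    M.runFrom q t (v ++ w) = M.runFrom (M.runFrom q t v) (fun u => t (v ++ u)) w := by
  induction v generalizing q t with
  | nil => rfl
  | cons d v ih =>
    simp only [List.cons_append, runFrom]
    exact ih _ _

lemma runFrom_snoc {Alpha Q : Type} (M : DPTA Alpha Q) (q : Q) (t : List Bool → Alpha)
    (v : List Bool) (d : Bool) :
    M.runFrom q t (v ++ [d]) = M.next (M.runFrom q t v) (t v) d := by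
  rw [runFrom_append]
  simp [runFrom, List.append_nil]

lemma run_snoc {Alpha Q : Type} (M : DPTA Alpha Q) (t : List Bool → Alpha)
    (v : List Bool) (d : Bool) :
    M.run t (v ++ [d]) = M.next (M.run t v) (t v) d :=
  runFrom_snoc M _ t v d

lemma next_top (s : Ab17) (d : Bool) : M17.next .top s d = .top := by
  cases s <;> cases d <;> rfl

lemma runFrom_top (t : List Bool → Ab17) (v : List Bool) :
    M17.runFrom .top t v = .top := by
  induction v generalizing t with
  | nil => rfl
  | cons d v ih => rw [runFrom, next_top]; exact ih _

lemma m17_rank_eq_one_iff (q : St17) : M17.rank q = 1 ↔ q = .p1 := by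
  cases q <;> simp [M17]

lemma m17_rank_le_one (q : St17) : M17.rank q ≤ 1 := by
  cases q <;> simp [M17]

lemma parityAccept_iff (f : ℕ → ℕ) (h : ∀ n, f n ≤ 1) :
    ParityAccept f ↔ ∀ᶠ n in atTop, f n ≠ 1 := by
  by_cases hf : ∃ᶠ n in atTop, f n = 1
  · have h1 : (1 : ℕ) ∈ {r : ℕ | ∃ᶠ n in atTop, f n = r} := hf
    have hbdd : ∀ r ∈ {r : ℕ | ∃ᶠ n in atTop, f n = r}, r ≤ 1 := by
      intro r hr
      obtain ⟨n, hn⟩ := hr.exists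
      exact hn ▸ h n
    have hsup : sSup {r : ℕ | ∃ᶠ n in atTop, f n = r} = 1 :=
      le_antisymm (csSup_le ⟨1, h1⟩ hbdd) (le_csSup ⟨1, hbdd⟩ h1)
    rw [ParityAccept, hsup]
    simp only [Nat.even_iff]
    constructor
    · intro h'; omega
    · intro h'; exact absurd hf (Filter.not_frequently.mpr (h'.mono fun n hn => hn))
  · rw [Filter.not_frequently] at hf
    have h0 : ∀ᶠ n in atTop, f n = 0 := by
      filter_upwards [hf] with n hn
      have := h n; omega
    have h0' : (0 : ℕ) ∈ {r : ℕ | ∃ᶠ n in atTop, f n = r} := h0.frequently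
    have hsub : {r : ℕ | ∃ᶠ n in atTop, f n = r} = {0} := by
      ext r
      simp only [Set.mem_setOf_eq, Set.mem_singleton_iff]
      constructor
      · intro hr
        obtain ⟨n, hn, hn'⟩ := (hr.and_eventually h0).exists
        omega
      · rintro rfl; exact h0'
    rw [ParityAccept, hsub, csSup_singleton]
    simp only [Even.zero, true_iff]
    filter_upwards [hf] with n hn using hn

end Aux
section Aux2
open DPTA

lemma pref_length (π : ℕ → Bool) (n : ℕ) : (pref π n).length = n := by
  simp [pref]

lemma pref_succ (π : ℕ → Bool) (n : ℕ) : pref π (n + 1) = pref π n ++ [π n] := by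
  simp only [pref, List.ofFn_succ', List.concat_eq_append, Fin.coe_castSucc, Fin.val_last]

lemma pref_add (π : ℕ → Bool) (a b : ℕ) :
    pref π (a + b) = pref π a ++ pref (fun i => π (a + i)) b := by
  induction b with
  | zero => simp [pref]
  | succ b ih =>
    rw [← Nat.add_assoc, pref_succ, ih, pref_succ, List.append_assoc]

lemma pref_const_false (π : ℕ → Bool) (b : ℕ) (h : ∀ i, i < b → π i = false) :
    pref π b = List.replicate b false := by
  apply List.ext_getElem
  · simp [pref]
  · intro i h1 h2
    simp only [pref, List.getElem_ofFn, List.getElem_replicate]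
    exact h i (by simpa [pref] using h1)

lemma runFrom_congr {Alpha Q : Type} (M : DPTA Alpha Q) (v : List Bool) :
    ∀ (q : Q) (t t' : List Bool → Alpha),
    (∀ i, i < v.length → t (v.take i) = t' (v.take i)) →
    M.runFrom q t v = M.runFrom q t' v := by
  induction v with
  | nil => intro q t t' _; rfl
  | cons d v ih =>
    intro q t t' h
    have h0 : t [] = t' [] := h 0 (by simp)
    simp only [runFrom, h0]
    apply ih
    intro i hi
    have := h (i + 1) (by simpa using Nat.succ_lt_succ hi)
    simpa [List.take_succ_cons] using this

lemma isOpen_run_eq (w : List Bool) (q : St17) :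
    IsOpen {t : List Bool → Ab17 | M17.run t w = q} := by
  rw [isOpen_iff_mem_nhds]
  intro t ht
  have hU : IsOpen (⋂ i ∈ Finset.range w.length,
      (fun t' : List Bool → Ab17 => t' (w.take i)) ⁻¹' {t (w.take i)}) := by
    apply isOpen_biInter_finset
    intro i _
    exact (continuous_apply _).isOpen_preimage _ (isOpen_discrete _)
  apply Filter.mem_of_superset (hU.mem_nhds (by simp))
  intro t' ht'
  simp only [Set.mem_iInter, Set.mem_preimage, Set.mem_singleton_iff, Finset.mem_range] at ht'
  show M17.run t' w = q
  rw [run, runFrom_congr M17 w _ t' t (fun i hi => ht' i hi)]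
  exact ht

lemma isClosed_run_ne (w : List Bool) :
    IsClosed {t : List Bool → Ab17 | M17.run t w ≠ .p1} := by
  have : {t : List Bool → Ab17 | M17.run t w ≠ .p1} =
      {t : List Bool → Ab17 | M17.run t w = .p1}ᶜ := rfl
  rw [this]
  exact (isOpen_run_eq w .p1).isClosed_compl

/-- states stay in {p0,p1,top} -/
lemma next_mem_p (q : St17) (hq : q = .p0 ∨ q = .p1 ∨ q = .top) (s : Ab17) (d : Bool) :
    M17.next q s d = .p0 ∨ M17.next q s d = .p1 ∨ M17.next q s d = .top := by
  rcases hq with rfl | rfl | rfl <;> cases s <;> cases d <;> simp [M17, DPTA.next]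

lemma next_true_top (q : St17) (hq : q = .p0 ∨ q = .p1 ∨ q = .top) (s : Ab17) :
    M17.next q s true = .top := by
  rcases hq with rfl | rfl | rfl <;> cases s <;> rfl

/-- The key characterization of the language. -/
lemma lang_iff (t : List Bool → Ab17) :
    t ∈ M17.Lang ↔ ∀ v : List Bool, ∃ N, ∀ k, N ≤ k →
      M17.run t (v ++ List.replicate k false) ≠ .p1 := by
  constructor
  · intro ht v
    set π : ℕ → Bool := fun i => v.getD i false with hπ
    have hp := ht π
    rw [parityAccept_iff _ (fun n => m17_rank_le_one _)] at hp
    obtain ⟨N, hN⟩ := Filter.eventually_atTop.mp hp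
    refine ⟨N, fun k hk => ?_⟩
    have hpref : pref π (v.length + k) = v ++ List.replicate k false := by
      rw [pref_add]
      congr 1
      · apply List.ext_getElem (by simp [pref])
        intro i h1 h2
        simp only [pref, List.getElem_ofFn, hπ]
        exact List.getD_eq_getElem v false h2
      · exact pref_const_false _ _ (fun i _ => List.getD_eq_default v false (by omega))
    have := hN (v.length + k) (by omega)
    rw [hpref] at this
    exact fun hc => this ((m17_rank_eq_one_iff _).mpr hc)
  · intro H π
    rw [parityAccept_iff _ (fun n => m17_rank_le_one _)]
    by_contra hfreq
    rw [Filter.not_eventually] at hfreq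
    simp only [not_not, m17_rank_eq_one_iff] at hfreq
    change ∃ᶠ m in atTop, M17.run t (pref π m) = St17.p1 at hfreq
    -- hfreq : ∃ᶠ m, runFrom init t (pref π m) = p1
    obtain ⟨m0, hm0, hm0ge⟩ := (hfreq.and_eventually (Filter.eventually_ge_atTop 1)).exists
    -- states from m0 on are in {p0,p1,top}
    have hinv : ∀ j, m0 ≤ j → (M17.run t (pref π j) = .p0 ∨ M17.run t (pref π j) = .p1 ∨
        M17.run t (pref π j) = .top) := by
      intro j hj
      induction j with
      | zero =>
        rw [Nat.le_zero] at hj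
        exact Or.inr (Or.inl (hj ▸ hm0))
      | succ j ih =>
        rcases Nat.lt_or_ge m0 (j+1) with h | h
        · have hj' := ih (by omega)
          rw [pref_succ, run_snoc]
          exact next_mem_p _ hj' _ _
        · have h' : m0 = j + 1 := by omega
          exact Or.inr (Or.inl (h' ▸ hm0))
    -- all directions after m0 are false
    have hstay : ∀ j, m0 ≤ j → π j = false := by
      intro j hj
      by_contra hne
      have hπj : π j = true := by simpa using hne
      have htop : M17.run t (pref π (j+1)) = .top := by
        rw [pref_succ, run_snoc, hπj]
        exact next_true_top _ (hinv j hj) _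
      obtain ⟨m, hmp1, hm⟩ := (hfreq.and_eventually (Filter.eventually_ge_atTop (j+1))).exists
      have : M17.run t (pref π m) = .top := by
        have hsplit : pref π m = pref π (j+1) ++ pref (fun i => π (j+1+i)) (m - (j+1)) := by
          have h1 := pref_add π (j+1) (m - (j+1))
          rw [show (j+1) + (m - (j+1)) = m by omega] at h1
          exact h1
        rw [hsplit, run, runFrom_append, ← run, htop, runFrom_top]
      rw [hmp1] at this; exact St17.noConfusion this
    obtain ⟨N, hN⟩ := H (pref π m0)
    obtain ⟨m, hmp1, hm⟩ := (hfreq.and_eventually (Filter.eventually_ge_atTop (m0+N))).exists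
    have hsplit : pref π m = pref π m0 ++ List.replicate (m - m0) false := by
      have h1 := pref_add π m0 (m - m0)
      rw [show m0 + (m - m0) = m by omega] at h1
      rw [h1, pref_const_false (fun i => π (m0 + i)) (m - m0) (fun i _ => hstay _ (by omega))]
    exact hN (m - m0) (by omega) (by rw [← hsplit]; exact hmp1)

end Aux2
section Part1
open DPTA

lemma lang_isPi03 : IsPi03 M17.Lang := by
  obtain ⟨e, he⟩ := exists_surjective_nat (List Bool)
  refine ⟨fun i => {t | ∃ N, ∀ k, N ≤ k →
    M17.run t (e i ++ List.replicate k false) ≠ .p1}, fun i => ?_, ?_⟩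
  · refine ⟨fun N => ⋂ k, {t | N ≤ k → M17.run t (e i ++ List.replicate k false) ≠ .p1},
      fun N => ?_, ?_⟩
    · apply isClosed_iInter
      intro k
      by_cases h : N ≤ k
      · simp only [h, true_implies]
        exact isClosed_run_ne _
      · simp only [h, false_implies]
        exact isClosed_univ
    · ext t
      simp only [Set.mem_iUnion, Set.mem_iInter, Set.mem_setOf_eq]
  · ext t
    simp only [Set.mem_iInter, Set.mem_setOf_eq]
    rw [lang_iff]
    constructor
    · intro h i; exact h (e i)
    · intro h v; obtain ⟨i, rfl⟩ := he v; exact h i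

end Part1
section Shape

/-- Shape of a node: `inl n` for `0^n`, `inr (n,j)` for `0^n 1 0^j`, `none` otherwise. -/
def shape : List Bool → Option (ℕ ⊕ ℕ × ℕ)
  | [] => some (.inl 0)
  | false :: v => (shape v).map (fun z => match z with
      | .inl n => .inl (n+1)
      | .inr (n, j) => .inr (n+1, j))
  | true :: v => match shape v with
      | some (.inl j) => some (.inr (0, j))
      | _ => none

lemma shape_replicate (n : ℕ) : shape (List.replicate n false) = some (.inl n) := by
  induction n with
  | zero => rfl
  | succ n ih => simp [List.replicate_succ, shape, ih]

lemma shape_node (n j : ℕ) :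
    shape (List.replicate n false ++ true :: List.replicate j false) = some (.inr (n, j)) := by
  induction n with
  | zero => simp [shape, shape_replicate]
  | succ n ih => simp [List.replicate_succ, shape, ih]

lemma shape_inl_inv : ∀ (v : List Bool) (n : ℕ), shape v = some (.inl n) →
    v = List.replicate n false := by
  intro v
  induction v with
  | nil => intro n h; simp [shape] at h; simp [← h]
  | cons d v ih =>
    intro n h
    cases d
    · rcases hsv : shape v with _ | z
      · simp [shape, hsv] at h
      · match z with
        | .inl m =>
          simp only [shape, hsv, Option.map_some] at h
          have hn : n = m + 1 := by simpa using h.symm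
          subst hn
          rw [List.replicate_succ, ih m hsv]
        | .inr (m, i) => simp [shape, hsv] at h
    · rcases hsv : shape v with _ | z
      · simp [shape, hsv] at h
      · match z with
        | .inl m => simp [shape, hsv] at h
        | .inr (m, i) => simp [shape, hsv] at h

lemma shape_inr_inv : ∀ (v : List Bool) (n j : ℕ), shape v = some (.inr (n, j)) →
    v = List.replicate n false ++ true :: List.replicate j false := by
  intro v
  induction v with
  | nil => intro n j h; simp [shape] at h
  | cons d v ih =>
    intro n j h
    cases d
    · rcases hsv : shape v with _ | z
      · simp [shape, hsv] at h
      · match z with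
        | .inl m => simp [shape, hsv] at h
        | .inr (m, i) =>
          simp only [shape, hsv, Option.map_some] at h
          have hn : n = m + 1 ∧ j = i := by
            have := h.symm; simp at this; omega
          rw [hn.1, hn.2, List.replicate_succ, ih m i hsv]
          rfl
    · rcases hsv : shape v with _ | z
      · simp [shape, hsv] at h
      · match z with
        | .inl m =>
          simp only [shape, hsv] at h
          have hn : n = 0 ∧ j = m := by simpa using h.symm
          rw [hn.1, hn.2, shape_inl_inv v m hsv]
          rfl
        | .inr (m, i) => simp [shape, hsv] at h

lemma shape_none_append (v w : List Bool) (h : shape v = none) : shape (v ++ w) = none := by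
  induction v with
  | nil => simp [shape] at h
  | cons d v ih =>
    cases d
    · simp only [shape, List.cons_append, Option.map_eq_none_iff] at h ⊢
      exact ih h
    · show (match shape (v ++ w) with
        | some (.inl j) => some (Sum.inr (0, j) : ℕ ⊕ ℕ × ℕ)
        | _ => none) = none
      rcases hvw : shape (v ++ w) with _ | z
      · rfl
      · match z with
        | .inl m =>
          exfalso
          have hv : v ++ w = List.replicate m false := shape_inl_inv _ _ hvw
          have hv' : v = List.replicate (min v.length m) false := by
            have h2 := congrArg (List.take v.length) hv
            rwa [List.take_left, List.take_replicate] at h2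
          have hsv : shape v = some (.inl (min v.length m)) := by
            have h3 := shape_replicate (min v.length m)
            rwa [← hv'] at h3
          simp [shape, hsv] at h
        | .inr (m, i) => rfl

end Shape
section Coding
open DPTA

variable (C : ℕ → ℕ → Set (ℕ → Bool))

/-- `x` is consistent with `C n m` up to coordinate `k`. -/
def Pk (n k m : ℕ) (x : ℕ → Bool) : Prop := ∃ y ∈ C n m, ∀ i, i < k → y i = x i

/-- The current guess for the least `m` with `x ∈ C n m`. -/
noncomputable def gss (n k : ℕ) (x : ℕ → Bool) : ℕ := sInf ({m | m ≤ k ∧ Pk C n k m x} ∪ {k + 1})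

/-- The letter written at position `j` of the `n`-th coding path. -/
noncomputable def letterF (n j : ℕ) (x : ℕ → Bool) : Ab17 :=
  if gss C n (j / 2 + 1) x = gss C n (j / 2) x then .c0 else .c1

/-- Number of `c₁`s among the first `j` letters. -/
noncomputable def cnt (n j : ℕ) (x : ℕ → Bool) : ℕ :=
  ∑ i ∈ Finset.range j, (if letterF C n i x = Ab17.c1 then 1 else 0)

/-- The state of the run at position `j` of the `n`-th coding path. -/
noncomputable def stF (n j : ℕ) (x : ℕ → Bool) : St17 :=
  if cnt C n j x % 2 = 0 then .p0 else .p1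

/-- The reduction map. -/
noncomputable def phiF (x : ℕ → Bool) (v : List Bool) : Ab17 :=
  match shape v with
  | some (.inl _) => .a
  | some (.inr (n, j)) => letterF C n j x
  | none => .b

lemma letter_pair (n k : ℕ) (x : ℕ → Bool) :
    letterF C n (2 * k) x = letterF C n (2 * k + 1) x := by
  have h1 : 2 * k / 2 = k := by omega
  have h2 : (2 * k + 1) / 2 = k := by omega
  rw [letterF, letterF, h1, h2]

lemma cnt_succ (n j : ℕ) (x : ℕ → Bool) :
    cnt C n (j + 1) x = cnt C n j x + (if letterF C n j x = Ab17.c1 then 1 else 0) := by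
  rw [cnt, Finset.sum_range_succ]; rfl

lemma cnt_even (n k : ℕ) (x : ℕ → Bool) : cnt C n (2 * k) x % 2 = 0 := by
  induction k with
  | zero => simp [cnt]
  | succ k ih =>
    have h : 2 * (k + 1) = (2 * k + 1) + 1 := by omega
    rw [h, cnt_succ, cnt_succ, ← letter_pair]
    split <;> omega

lemma odd_step (n j : ℕ) (x : ℕ → Bool) (h : cnt C n j x % 2 = 1) :
    letterF C n j x = .c1 ∧ cnt C n (j + 1) x % 2 = 0 := by
  rcases Nat.even_or_odd j with ⟨k, hk⟩ | ⟨k, hk⟩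
  · exfalso; rw [hk, show k + k = 2 * k by omega] at h
    have := cnt_even C n k x; omega
  · subst hk
    have heq : cnt C n (2 * k + 1) x
        = cnt C n (2 * k) x + (if letterF C n (2 * k) x = Ab17.c1 then 1 else 0) :=
      cnt_succ C n (2 * k) x
    have hev := cnt_even C n k x
    have hc1 : letterF C n (2 * k) x = Ab17.c1 := by
      by_contra hne
      rw [if_neg hne] at heq
      omega
    refine ⟨by rw [← letter_pair]; exact hc1, ?_⟩
    have := cnt_even C n (k + 1) x
    rwa [show 2 * (k + 1) = 2 * k + 1 + 1 by omega] at this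

lemma cnt_zero (n : ℕ) (x : ℕ → Bool) : cnt C n 0 x = 0 := by simp [cnt]

lemma letterF_cases (n j : ℕ) (x : ℕ → Bool) :
    letterF C n j x = .c0 ∨ letterF C n j x = .c1 := by
  rw [letterF]; split <;> simp

/-- bad nodes: `0^n 1 0^j 1 w` has shape `none` -/
lemma shape_node_bad (n j : ℕ) (w : List Bool) :
    shape (List.replicate n false ++ true :: (List.replicate j false ++ true :: w)) = none := by
  induction n with
  | zero =>
    show (match shape (List.replicate j false ++ true :: w) with
      | some (.inl j') => some (Sum.inr (0, j') : ℕ ⊕ ℕ × ℕ)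
      | _ => none) = none
    rcases hs : shape (List.replicate j false ++ true :: w) with _ | z
    · rfl
    · match z with
      | .inl m =>
        exfalso
        have := shape_inl_inv _ _ hs
        have htrue : true ∈ List.replicate m false := by
          rw [← this]; simp
        exact Bool.noConfusion (List.eq_of_mem_replicate htrue)
      | .inr (m, i) => rfl
  | succ n ih =>
    rw [List.replicate_succ]
    show (shape (List.replicate n false ++ true :: (List.replicate j false ++ true :: w))).map _
      = none
    rw [ih]; rfl

/-- The master lemma computing the run of `phiF C x`. -/
lemma run_phiF (x : ℕ → Bool) (v : List Bool) :
    M17.run (phiF C x) v = (match shape v with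
      | some (.inl _) => St17.s
      | some (.inr (n, j)) => stF C n j x
      | none => St17.top) := by
  induction v using List.reverseRecOn with
  | nil => rfl
  | append_singleton v d ih =>
    rw [run_snoc]
    rcases hsv : shape v with _ | z
    · rw [hsv] at ih
      rw [shape_none_append v [d] hsv, ih]
      simp only []
      cases phiF C x v <;> cases d <;> rfl
    · match z with
      | .inl n =>
        rw [hsv] at ih
        have hv := shape_inl_inv v n hsv
        have hphi : phiF C x v = .a := by rw [phiF, hsv]
        cases d
        · have : shape (v ++ [false]) = some (.inl (n + 1)) := by
            rw [hv, ← List.replicate_succ', shape_replicate]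
          rw [this, ih, hphi]
          rfl
        · have : shape (v ++ [true]) = some (.inr (n, 0)) := by
            rw [hv, show (List.replicate n false ++ [true] : List Bool)
              = List.replicate n false ++ true :: List.replicate 0 false by rfl, shape_node]
          rw [this, ih, hphi]
          simp only [stF, cnt_zero]
          rfl
      | .inr (n, j) =>
        rw [hsv] at ih
        have hv := shape_inr_inv v n j hsv
        have hphi : phiF C x v = letterF C n j x := by rw [phiF, hsv]
        cases d
        · have hsh : shape (v ++ [false]) = some (.inr (n, j + 1)) := by
            rw [hv, List.append_assoc]
            show shape (List.replicate n false ++ true :: (List.replicate j false ++ [false]))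
              = _
            rw [← List.replicate_succ', shape_node]
          rw [hsh, ih, hphi]
          show M17.next (stF C n j x) (letterF C n j x) false = stF C n (j + 1) x
          by_cases he' : cnt C n j x % 2 = 0
          · have h1 : stF C n j x = .p0 := by rw [stF, if_pos he']
            rcases letterF_cases C n j x with hc | hc
            · have h2 : stF C n (j + 1) x = .p0 := by
                rw [stF, if_pos]
                rw [cnt_succ, hc]; simp; omega
              rw [h1, hc, h2]; rfl
            · have h2 : stF C n (j + 1) x = .p1 := by
                rw [stF, if_neg]
                rw [cnt_succ, hc]; simp; omega
              rw [h1, hc, h2]; rfl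
          · have ho' : cnt C n j x % 2 = 1 := by omega
            obtain ⟨hc1, hnext⟩ := odd_step C n j x ho'
            have h1 : stF C n j x = .p1 := by rw [stF, if_neg he']
            have h2 : stF C n (j + 1) x = .p0 := by rw [stF, if_pos hnext]
            rw [h1, hc1, h2]; rfl
        · have hsh : shape (v ++ [true]) = none := by
            rw [hv, List.append_assoc]
            exact shape_node_bad n j []
          rw [hsh, ih, hphi]
          simp only [stF]
          rcases letterF_cases C n j x with hc | hc <;> rw [hc] <;> split <;> rfl



end Coding
section Reduction
open DPTA

variable (C : ℕ → ℕ → Set (ℕ → Bool))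

lemma Pk_anti {n k k' m : ℕ} {x : ℕ → Bool} (hkk : k ≤ k') (h : Pk C n k' m x) :
    Pk C n k m x := by
  obtain ⟨y, hy, hagree⟩ := h
  exact ⟨y, hy, fun i hi => hagree i (by omega)⟩

lemma mem_of_forall_Pk {n m : ℕ} {x : ℕ → Bool} (hC : IsClosed (C n m))
    (h : ∀ k, Pk C n k m x) : x ∈ C n m := by
  rw [← hC.closure_eq]
  rw [mem_closure_iff]
  intro o ho hxo
  obtain ⟨I, u, hu, hsub⟩ := isOpen_pi_iff.mp ho x hxo
  obtain ⟨y, hy, hagree⟩ := h (I.sup id + 1)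
  refine ⟨y, hsub ?_, hy⟩
  intro i hi
  rw [hagree i (by have := Finset.le_sup (f := id) hi; simp at this; omega)]
  exact (hu i hi).2

lemma gss_le (n k : ℕ) (x : ℕ → Bool) : gss C n k x ≤ k + 1 :=
  Nat.sInf_le (Or.inr rfl)

lemma gss_eventually_const {n : ℕ} {x : ℕ → Bool} (hC : ∀ m, IsClosed (C n m))
    (hx : x ∈ ⋃ m, C n m) : ∃ K, ∀ k, K ≤ k → gss C n k x = sInf {m | x ∈ C n m} := by
  obtain ⟨m', hm'⟩ := Set.mem_iUnion.mp hx
  set m1 := sInf {m | x ∈ C n m} with hm1def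
  have hm1 : x ∈ C n m1 := Nat.sInf_mem (s := {m | x ∈ C n m}) ⟨m', hm'⟩
  have hlt : ∀ m, m < m1 → x ∉ C n m := fun m hm => Nat.notMem_of_lt_sInf hm
  have hex : ∀ m, ∃ k0, m < m1 → ¬ Pk C n k0 m x := by
    intro m
    by_cases hm : m < m1
    · by_contra hcon
      push_neg at hcon
      exact hlt m hm (mem_of_forall_Pk C (hC m) (fun k => (hcon k).2))
    · exact ⟨0, fun h => absurd h hm⟩
  choose F hF using hex
  refine ⟨max m1 ((Finset.range m1).sup F), fun k hk => ?_⟩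
  have hm1k : m1 ≤ k := le_trans (le_max_left _ _) hk
  apply le_antisymm
  · apply Nat.sInf_le
    exact Or.inl ⟨hm1k, ⟨x, hm1, fun i _ => rfl⟩⟩
  · apply le_csInf ⟨k + 1, Or.inr rfl⟩
    rintro m (⟨hmk, hPk⟩ | hm)
    · by_contra hcon
      push_neg at hcon
      have hFm : F m ≤ k := by
        refine le_trans (le_trans (Finset.le_sup (f := F) (Finset.mem_range.mpr hcon)) ?_) hk
        exact le_max_right _ _
      exact hF m hcon (Pk_anti C hFm hPk)
    · simp only [Set.mem_singleton_iff] at hm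
      omega

lemma letterF_eventually_c0 {n : ℕ} {x : ℕ → Bool} (hC : ∀ m, IsClosed (C n m))
    (hx : x ∈ ⋃ m, C n m) : ∃ K, (∀ i, K ≤ i → letterF C n i x = .c0) ∧
      ∀ m, K ≤ m → cnt C n m x % 2 = 0 := by
  obtain ⟨K0, hK0⟩ := gss_eventually_const C hC hx
  refine ⟨2 * K0, fun i hi => ?_, ?_⟩
  · rw [letterF, if_pos]
    rw [hK0 _ (by omega), hK0 _ (by omega)]
  · intro m hm
    induction m with
    | zero => simp [cnt]
    | succ m ih =>
      rcases Nat.lt_or_ge m (2 * K0) with h | h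
      · have : m + 1 = 2 * K0 := by omega
        rw [this]
        exact cnt_even C n K0 x
      · have hc0 : letterF C n m x = .c0 := by
          rw [letterF, if_pos]
          rw [hK0 _ (by omega), hK0 _ (by omega)]
        rw [cnt_succ, hc0]
        simpa using ih (by omega)

lemma phiF_mem_lang {x : ℕ → Bool} (hC : ∀ n m, IsClosed (C n m))
    (hx : ∀ n, x ∈ ⋃ m, C n m) : phiF C x ∈ M17.Lang := by
  rw [lang_iff]
  intro v
  rcases hsv : shape v with _ | z
  · refine ⟨0, fun k _ => ?_⟩
    rw [run_phiF, shape_none_append v _ hsv]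
    simp
  · match z with
    | .inl n =>
      refine ⟨0, fun k _ => ?_⟩
      rw [shape_inl_inv v n hsv, ← List.replicate_add, run_phiF, shape_replicate]
      simp
    | .inr (n, j) =>
      obtain ⟨K, _, hKcnt⟩ := letterF_eventually_c0 C (hC n) (hx n)
      refine ⟨K, fun k hk => ?_⟩
      have hv : v ++ List.replicate k false
          = List.replicate n false ++ true :: List.replicate (j + k) false := by
        rw [shape_inr_inv v n j hsv, List.append_assoc, List.replicate_add]
        rfl
      rw [hv, run_phiF, shape_node]
      simp only [stF]
      rw [if_pos (hKcnt (j + k) (by omega))]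
      simp

lemma gss_exists_change {n : ℕ} {x : ℕ → Bool} (hC : ∀ m, IsClosed (C n m))
    (hx : ∀ m, x ∉ C n m) : ∀ K, ∃ k, K ≤ k ∧ gss C n (k + 1) x ≠ gss C n k x := by
  intro K
  by_contra hcon
  push_neg at hcon
  have hconst : ∀ k, K ≤ k → gss C n k x = gss C n K x := by
    intro k hk
    induction k with
    | zero => rw [Nat.le_zero] at hk; rw [hk]
    | succ k ih =>
      rcases Nat.lt_or_ge K (k + 1) with h | h
      · rw [hcon k (by omega), ih (by omega)]
      · have : K = k + 1 := by omega
        rw [this]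
  set c := gss C n K x with hc
  have hPkc : ∀ k, Pk C n k c x := by
    intro k
    set k' := max k (max (K + 1) (c + 1)) with hk'
    have h1 : gss C n k' x = c := hconst k' (by omega)
    have h2 : gss C n k' x ∈ ({m | m ≤ k' ∧ Pk C n k' m x} ∪ {k' + 1} : Set ℕ) :=
      Nat.sInf_mem ⟨k' + 1, Or.inr rfl⟩
    rw [h1] at h2
    rcases h2 with ⟨_, hPk⟩ | h2
    · exact Pk_anti C (by omega) hPk
    · simp only [Set.mem_singleton_iff] at h2
      omega
  exact hx c (mem_of_forall_Pk C (hC c) hPkc)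

lemma phiF_not_mem_lang {x : ℕ → Bool} {n : ℕ} (hC : ∀ m, IsClosed (C n m))
    (hx : ∀ m, x ∉ C n m) : phiF C x ∉ M17.Lang := by
  intro hLang
  set π : ℕ → Bool := fun i => decide (i = n) with hπ
  have hp := hLang π
  rw [parityAccept_iff _ (fun m => m17_rank_le_one _)] at hp
  obtain ⟨N, hN⟩ := Filter.eventually_atTop.mp hp
  obtain ⟨k, hkN, hchg⟩ := gss_exists_change C hC hx N
  have hpref : pref π (n + 1 + (2 * k + 1))
      = List.replicate n false ++ true :: List.replicate (2 * k + 1) false := by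
    rw [pref_add]
    have h1 : pref π (n + 1) = List.replicate n false ++ [true] := by
      apply List.ext_getElem (by simp [pref])
      intro i h1 h2
      simp only [pref, List.getElem_ofFn, hπ]
      rcases Nat.lt_or_ge i n with h | h
      · rw [List.getElem_append_left (by simpa using h)]
        rw [List.getElem_replicate]
        simp only [decide_eq_false_iff_not]
        omega
      · have : i = n := by simp [pref] at h1; omega
        subst this
        rw [List.getElem_append_right (by simp)]
        simp
    have h2 : pref (fun i => π (n + 1 + i)) (2 * k + 1)
        = List.replicate (2 * k + 1) false := by
      apply pref_const_false
      intro i _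
      simp [hπ]
      omega
    rw [h1, h2, List.append_assoc]
    rfl
  have hletter : letterF C n (2 * k) x = .c1 := by
    rw [letterF, if_neg]
    have h1 : 2 * k / 2 = k := by omega
    rw [h1]
    exact hchg
  have hcnt : cnt C n (2 * k + 1) x % 2 = 1 := by
    rw [cnt_succ, hletter]
    have := cnt_even C n k x
    simp
    omega
  have hrun : M17.run (phiF C x) (pref π (n + 1 + (2 * k + 1))) = .p1 := by
    rw [hpref, run_phiF, shape_node]
    simp only [stF]
    rw [if_neg (by omega)]
  have := hN (n + 1 + (2 * k + 1)) (by omega)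
  apply this
  show M17.rank (M17.run (phiF C x) (pref π (n + 1 + (2 * k + 1)))) = 1
  rw [hrun]
  rfl

lemma Pk_local {n k m : ℕ} {x y : ℕ → Bool} (h : ∀ i, i < k → x i = y i) :
    Pk C n k m x ↔ Pk C n k m y := by
  constructor <;> intro ⟨z, hz, hagree⟩ <;>
    exact ⟨z, hz, fun i hi => by rw [hagree i hi, h i hi]⟩
  
lemma gss_local {n k : ℕ} {x y : ℕ → Bool} (h : ∀ i, i < k → x i = y i) :
    gss C n k x = gss C n k y := by
  unfold gss
  congr 1
  ext m
  simp only [Set.mem_union, Set.mem_setOf_eq]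
  rw [Pk_local C h]

lemma phiF_local (v : List Bool) : ∃ K, ∀ x y : ℕ → Bool,
    (∀ i, i < K → x i = y i) → phiF C x v = phiF C y v := by
  rcases hsv : shape v with _ | z
  · exact ⟨0, fun x y _ => by rw [phiF, phiF, hsv]⟩
  · match z with
    | .inl n => exact ⟨0, fun x y _ => by rw [phiF, phiF, hsv]⟩
    | .inr (n, j) =>
      refine ⟨j / 2 + 2, fun x y h => ?_⟩
      rw [phiF, phiF, hsv]
      simp only []
      rw [letterF, letterF,
        gss_local C (fun i hi => h i (by omega)),
        gss_local C (fun i hi => h i (by omega))]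

lemma continuous_phiF : Continuous (phiF C) := by
  apply continuous_pi
  intro v
  apply IsLocallyConstant.continuous
  rw [IsLocallyConstant.iff_exists_open]
  intro x
  obtain ⟨K, hK⟩ := phiF_local C v
  refine ⟨⋂ i ∈ Finset.range K, (fun y : ℕ → Bool => y i) ⁻¹' {x i}, ?_, ?_, ?_⟩
  · apply isOpen_biInter_finset
    intro i _
    exact (continuous_apply _).isOpen_preimage _ (isOpen_discrete _)
  · simp
  · intro y hy
    simp only [Set.mem_iInter, Set.mem_preimage, Set.mem_singleton_iff, Finset.mem_range] at hy
    exact hK y x (fun i hi => hy i hi)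

end Reduction
/-- `L(M17)` is `Π⁰₃`-complete. -/
theorem M17_pi03_complete :
    IsPi03 M17.Lang ∧ ∀ A : Set (ℕ → Bool), IsPi03 A → WadgeLE A M17.Lang := by
  refine ⟨lang_isPi03, fun A hA => ?_⟩
  obtain ⟨f, hf, hAeq⟩ := hA
  choose C hCclosed hCeq using hf
  refine ⟨phiF C, continuous_phiF C, ?_⟩
  ext x
  simp only [Set.mem_preimage]
  constructor
  · intro hxA
    apply phiF_mem_lang C hCclosed
    intro n
    rw [← hCeq n]
    exact Set.mem_iInter.mp (hAeq ▸ hxA) n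
  · intro hphi
    by_contra hxA
    rw [hAeq, Set.mem_iInter] at hxA
    push_neg at hxA
    obtain ⟨n, hn⟩ := hxA
    rw [hCeq n, Set.mem_iUnion] at hn
    push_neg at hn
    exact phiF_not_mem_lang C (hCclosed n) hn hphi
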